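/- For every n ∈ ℕ, there exists a convex geometric graph with n vertices and O(n^(3/2)) edges that is universal for the family of n-vertex outerplanar graphs consisting of a spanning cycle plus 2 disjoint chords. Specifically, placing n vertices as a regular convex n-gon and adding, for each s in the set S = {0,…,⌊√n⌋−1} ∪ {i·⌊√n⌋ : 1 ≤ i ≤ ⌊√n⌋}, a star centered at vertex v_s connecting it to all other vertices, yields such a graph. -/

import Mathlib

def cycAdj {n : ℕ} (i j : Fin n) : Prop :=
  i ≠ j ∧ (((i : ℕ) + 1) % n = (j : ℕ) ∨ ((j : ℕ) + 1) % n = (i : ℕ))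

def chordsCross {n : ℕ} (a b c d : Fin n) : Prop :=
  (min a b < min c d ∧ min c d < max a b ∧ max a b < max c d) ∨
  (min c d < min a b ∧ min a b < max c d ∧ max c d < max a b)

def IsPlaneEmb {n : ℕ} (H G : SimpleGraph (Fin n)) (f : Fin n → Fin n) : Prop :=
  Function.Injective f ∧ (∀ u v, H.Adj u v → G.Adj (f u) (f v)) ∧
  ∀ u v x y, H.Adj u v → H.Adj x y →
    u ≠ x → u ≠ y → v ≠ x → v ≠ y → ¬ chordsCross (f u) (f v) (f x) (f y)

def UniversalFor {n : ℕ} (G : SimpleGraph (Fin n)) (F : Set (SimpleGraph (Fin n))) : Prop :=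
  ∀ H ∈ F, ∃ f, IsPlaneEmb H G f

def Ofam (h n : ℕ) : Set (SimpleGraph (Fin n)) :=
  {H | ∃ (g : Fin n ≃ Fin n) (D : Finset (Fin n × Fin n)),
    D.card = h ∧
    (∀ p ∈ D, p.1 ≠ p.2 ∧ ¬ cycAdj p.1 p.2) ∧
    (∀ p ∈ D, ∀ q ∈ D, p ≠ q →
      p.1 ≠ q.1 ∧ p.1 ≠ q.2 ∧ p.2 ≠ q.1 ∧ p.2 ≠ q.2 ∧
      ¬ chordsCross p.1 p.2 q.1 q.2) ∧
    ∀ u v, H.Adj u v ↔ (cycAdj (g u) (g v) ∨ (g u, g v) ∈ D ∨ (g v, g u) ∈ D)}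

/-- `S = {0,…,⌊√n⌋−1} ∪ {i·⌊√n⌋ : 1 ≤ i ≤ ⌊√n⌋}`. -/
def sqrtSet (n : ℕ) : Finset ℕ :=
  Finset.range (Nat.sqrt n) ∪ (Finset.Icc 1 (Nat.sqrt n)).image (fun i => i * Nat.sqrt n)

/-- The convex geometric graph on a regular `n`-gon consisting of the outer cycle plus
a star centered at `v_s` for every `s ∈ S`. -/
def starGraph (n : ℕ) : SimpleGraph (Fin n) :=
  SimpleGraph.fromRel (fun i j => cycAdj i j ∨ (i : ℕ) ∈ sqrtSet n ∨ (j : ℕ) ∈ sqrtSet n)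

def natCross (a b c d : ℕ) : Prop :=
  (min a b < min c d ∧ min c d < max a b ∧ max a b < max c d) ∨
  (min c d < min a b ∧ min a b < max c d ∧ max c d < max a b)

lemma coe_min {n : ℕ} (a b : Fin n) : ((min a b : Fin n) : ℕ) = min (a : ℕ) (b : ℕ) := by
  rcases le_total a b with h | h
  · rw [min_eq_left h, min_eq_left (Fin.le_def.mp h)]
  · rw [min_eq_right h, min_eq_right (Fin.le_def.mp h)]

lemma coe_max {n : ℕ} (a b : Fin n) : ((max a b : Fin n) : ℕ) = max (a : ℕ) (b : ℕ) := by
  rcases le_total a b with h | h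
  · rw [max_eq_right h, max_eq_right (Fin.le_def.mp h)]
  · rw [max_eq_left h, max_eq_left (Fin.le_def.mp h)]

lemma chordsCross_iff_natCross {n : ℕ} (a b c d : Fin n) :
    chordsCross a b c d ↔ natCross (a : ℕ) (b : ℕ) (c : ℕ) (d : ℕ) := by
  unfold chordsCross natCross
  simp only [Fin.lt_def, coe_min, coe_max]

lemma natCross_swap₁ {a b c d : ℕ} : natCross a b c d ↔ natCross b a c d := by
  unfold natCross; omega

lemma natCross_swap₂ {a b c d : ℕ} : natCross a b c d ↔ natCross a b d c := by
  unfold natCross; omega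

lemma natCross_comm {a b c d : ℕ} : natCross a b c d ↔ natCross c d a b := by
  unfold natCross; omega

/-- single rotation step -/
def nrot (n x : ℕ) : ℕ := if x + 1 < n then x + 1 else 0

lemma nrot_lt {n x : ℕ} (hx : x < n) : nrot n x < n := by unfold nrot; split <;> omega

lemma nrot_inj {n x y : ℕ} (hx : x < n) (hy : y < n) (h : nrot n x = nrot n y) : x = y := by
  unfold nrot at h; split_ifs at h <;> omega

lemma natCross_nrot {n a b c d : ℕ} (ha : a < n) (hb : b < n) (hc : c < n) (hd : d < n)
    (hab : a ≠ b) (hac : a ≠ c) (had : a ≠ d) (hbc : b ≠ c) (hbd : b ≠ d) (hcd : c ≠ d) :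
    natCross (nrot n a) (nrot n b) (nrot n c) (nrot n d) ↔ natCross a b c d := by
  unfold natCross nrot
  split_ifs <;> omega

lemma nrot_eq_mod {n x : ℕ} (hx : x < n) : (x + 1) % n = nrot n x := by
  unfold nrot; split_ifs with h
  · exact Nat.mod_eq_of_lt h
  · have : x + 1 = n := by omega
    rw [this, Nat.mod_self]

lemma natCross_rot {n : ℕ} (t : ℕ) : ∀ a b c d : ℕ, a < n → b < n → c < n → d < n →
    a ≠ b → a ≠ c → a ≠ d → b ≠ c → b ≠ d → c ≠ d →
    (natCross ((a + t) % n) ((b + t) % n) ((c + t) % n) ((d + t) % n) ↔ natCross a b c d) := by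
  induction t with
  | zero => intro a b c d ha hb hc hd _ _ _ _ _ _
            simp [Nat.mod_eq_of_lt, ha, hb, hc, hd]
  | succ t ih =>
    intro a b c d ha hb hc hd hab hac had hbc hbd hcd
    have h1 : ∀ x : ℕ, x < n → (x + (t+1)) % n = (nrot n x + t) % n := by
      intro x hx
      rw [show x + (t+1) = (x+1) + t by ring, ← Nat.mod_add_mod, nrot_eq_mod hx]
    rw [h1 a ha, h1 b hb, h1 c hc, h1 d hd]
    rw [ih _ _ _ _ (nrot_lt ha) (nrot_lt hb) (nrot_lt hc) (nrot_lt hd)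
      (fun h => hab (nrot_inj ha hb h)) (fun h => hac (nrot_inj ha hc h))
      (fun h => had (nrot_inj ha hd h)) (fun h => hbc (nrot_inj hb hc h))
      (fun h => hbd (nrot_inj hb hd h)) (fun h => hcd (nrot_inj hc hd h))]
    exact natCross_nrot ha hb hc hd hab hac had hbc hbd hcd
/-- rotation of the polygon by `t` -/
def shiftF {n : ℕ} (t : ℕ) (x : Fin n) : Fin n := ⟨((x : ℕ) + t) % n, Nat.mod_lt _ x.pos⟩

lemma addmod_inj {n t x y : ℕ} (hx : x < n) (hy : y < n) (h : (x + t) % n = (y + t) % n) :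
    x = y := by
  have := Nat.ModEq.add_right_cancel' t (h : x + t ≡ y + t [MOD n])
  rwa [Nat.ModEq, Nat.mod_eq_of_lt hx, Nat.mod_eq_of_lt hy] at this

lemma shiftF_inj {n t : ℕ} : Function.Injective (shiftF (n := n) t) := by
  intro x y h
  exact Fin.ext (addmod_inj x.isLt y.isLt (by simpa [shiftF, Fin.ext_iff] using h))

lemma cycAdj_shiftF {n t : ℕ} {i j : Fin n} (h : cycAdj i j) :
    cycAdj (shiftF t i) (shiftF t j) := by
  refine ⟨fun hh => h.1 (shiftF_inj hh), ?_⟩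
  have key : ∀ x y : Fin n, ((x : ℕ) + 1) % n = (y : ℕ) →
      (((shiftF t x : Fin n) : ℕ) + 1) % n = ((shiftF t y : Fin n) : ℕ) := by
    intro x y hxy
    show (((x : ℕ) + t) % n + 1) % n = ((y : ℕ) + t) % n
    rw [Nat.mod_add_mod, show (x : ℕ) + t + 1 = ((x : ℕ) + 1) + t by ring,
      ← Nat.mod_add_mod, hxy]
  rcases h.2 with h2 | h2
  · exact Or.inl (key _ _ h2)
  · exact Or.inr (key _ _ h2)

lemma not_cross_of_cycAdj_left {n : ℕ} {a b : Fin n} (c d : Fin n) (h : cycAdj a b) :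
    ¬ chordsCross a b c d := by
  rw [chordsCross_iff_natCross]
  have ha := a.isLt; have hb := b.isLt; have hc := c.isLt; have hd := d.isLt
  have hkey : ∀ x y : Fin n, ((x : ℕ) + 1) % n = (y : ℕ) →
      ((y : ℕ) = (x : ℕ) + 1 ∨ ((x : ℕ) + 1 = n ∧ (y : ℕ) = 0)) := by
    intro x y hxy
    rcases Nat.lt_or_ge ((x : ℕ) + 1) n with hl | hl
    · left; rw [← hxy, Nat.mod_eq_of_lt hl]
    · right
      have hxn : (x : ℕ) + 1 = n := by omega
      refine ⟨hxn, ?_⟩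
      rw [← hxy, hxn, Nat.mod_self]
  rcases h.2 with h2 | h2
  · rcases hkey _ _ h2 with h3 | h3 <;> unfold natCross <;> omega
  · rcases hkey _ _ h2 with h3 | h3 <;> unfold natCross <;> omega

lemma not_cross_of_cycAdj_right {n : ℕ} {a b : Fin n} (c d : Fin n) (h : cycAdj a b) :
    ¬ chordsCross c d a b := by
  intro hc
  exact not_cross_of_cycAdj_left c d h
    (by rw [chordsCross_iff_natCross] at hc ⊢; exact natCross_comm.mp hc)

/-- key arithmetic lemma: some difference `d ≤ n/2` is realized inside `sqrtSet n`. -/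
lemma diff_lemma (n d : ℕ) (hd : 1 ≤ d) (hdn : 2 * d ≤ n) :
    ∃ a, a ∈ sqrtSet n ∧ a + d ∈ sqrtSet n ∧ a + d < n := by
  obtain ⟨s, hs⟩ : ∃ s, s = Nat.sqrt n := ⟨_, rfl⟩
  have hsl : s * s ≤ n := by rw [hs]; have := Nat.sqrt_le' n; nlinarith [this]
  have hsu : n < (s + 1) * (s + 1) := by rw [hs]; have := Nat.lt_succ_sqrt' n; nlinarith [this]
  have hn2 : 2 ≤ n := by omega
  have hs1 : 1 ≤ s := by
    by_contra hh
    have : s = 0 := by omega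
    rw [this] at hsu; omega
  have hexp : (s + 1) * (s + 1) = s * s + 2 * s + 1 := by ring
  have hds : d ≤ s * s := by
    rcases Nat.lt_or_ge s 2 with h2 | h2
    · have hs1' : s = 1 := by omega
      rw [hs1'] at hsu ⊢; omega
    · have h2s : 2 * s ≤ s * s := by nlinarith
      omega
  -- construct a and b
  have hspos : 0 < s := hs1
  obtain ⟨Q, hQ⟩ : ∃ Q, Q = (d - 1) / s := ⟨_, rfl⟩
  obtain ⟨q, hq⟩ : ∃ q, q = Q + 1 := ⟨_, rfl⟩
  have hK1 : Q * s ≤ d - 1 := by rw [hQ]; exact Nat.div_mul_le_self _ _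
  have hK2 : d - 1 < Q * s + s := by
    have h1 := Nat.div_add_mod (d - 1) s
    have h2 := Nat.mod_lt (d - 1) hspos
    have h3 : s * ((d - 1) / s) = Q * s := by rw [hQ]; ring
    omega
  have hqss : q * s = Q * s + s := by rw [hq]; ring
  have hk2 : d - 1 < q * s := by omega
  have hq1 : 1 ≤ q := by omega
  have hqs : q ≤ s := by
    have hdlt : d - 1 < s * s := by omega
    have hlt : Q < s := by
      rw [hQ]; exact (Nat.div_lt_iff_lt_mul hspos).mpr hdlt
    omega
  have hbd : q * s ≤ d - 1 + s := by omega
  have h2s' : s ≤ n - d := by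
    rcases Nat.lt_or_ge s 2 with h2 | h2
    · omega
    · have : 2 * s ≤ s * s := by nlinarith
      omega
  refine ⟨q * s - d, ?_, ?_, ?_⟩
  · -- in range s
    have : q * s - d < s := by omega
    simp only [sqrtSet, Finset.mem_union, Finset.mem_range, ← hs]
    exact Or.inl this
  · have hqd : d ≤ q * s := by omega
    have : q * s - d + d = q * s := by omega
    rw [this]
    simp only [sqrtSet, Finset.mem_union, Finset.mem_image, Finset.mem_Icc, ← hs]
    exact Or.inr ⟨q, ⟨hq1, hqs⟩, rfl⟩
  · omega

/-- choose base endpoints on the two chords with small cyclic distance. -/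
lemma exists_base (n p1 q1 : ℕ) (hp : p1 < n) (hq : q1 < n) (hne : p1 ≠ q1) :
    ∃ e₁ e₂ d, 1 ≤ d ∧ 2 * d ≤ n ∧ (e₁ + d) % n = e₂ ∧
      ((e₁ = p1 ∧ e₂ = q1) ∨ (e₁ = q1 ∧ e₂ = p1)) := by
  rcases Nat.lt_or_ge p1 q1 with h | h
  · set δ := q1 - p1 with hδ
    rcases le_or_gt (2 * δ) n with h2 | h2
    · exact ⟨p1, q1, δ, by omega, h2, by rw [show p1 + δ = q1 by omega, Nat.mod_eq_of_lt hq],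
        Or.inl ⟨rfl, rfl⟩⟩
    · refine ⟨q1, p1, n - δ, by omega, by omega, ?_, Or.inr ⟨rfl, rfl⟩⟩
      rw [show q1 + (n - δ) = n + p1 by omega, Nat.add_mod_left, Nat.mod_eq_of_lt hp]
  · set δ := p1 - q1 with hδ
    rcases le_or_gt (2 * δ) n with h2 | h2
    · exact ⟨q1, p1, δ, by omega, h2, by rw [show q1 + δ = p1 by omega, Nat.mod_eq_of_lt hp],
        Or.inr ⟨rfl, rfl⟩⟩
    · refine ⟨p1, q1, n - δ, by omega, by omega, ?_, Or.inl ⟨rfl, rfl⟩⟩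
      rw [show p1 + (n - δ) = n + q1 by omega, Nat.add_mod_left, Nat.mod_eq_of_lt hq]
lemma chordsCross_swap₁ {n : ℕ} (a b c d : Fin n) :
    chordsCross a b c d ↔ chordsCross b a c d := by
  rw [chordsCross_iff_natCross, chordsCross_iff_natCross]; exact natCross_swap₁

lemma chordsCross_swap₂ {n : ℕ} (a b c d : Fin n) :
    chordsCross a b c d ↔ chordsCross a b d c := by
  rw [chordsCross_iff_natCross, chordsCross_iff_natCross]; exact natCross_swap₂

lemma chordsCross_comm' {n : ℕ} (a b c d : Fin n) :
    chordsCross a b c d ↔ chordsCross c d a b := by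
  rw [chordsCross_iff_natCross, chordsCross_iff_natCross]; exact natCross_comm

lemma cross_shiftF {n t : ℕ} {a b c d : Fin n}
    (hab : a ≠ b) (hac : a ≠ c) (had : a ≠ d) (hbc : b ≠ c) (hbd : b ≠ d) (hcd : c ≠ d)
    (h : ¬ chordsCross a b c d) :
    ¬ chordsCross (shiftF t a) (shiftF t b) (shiftF t c) (shiftF t d) := by
  rw [chordsCross_iff_natCross] at h ⊢
  have hiff := natCross_rot (n := n) t (a : ℕ) (b : ℕ) (c : ℕ) (d : ℕ)
    a.isLt b.isLt c.isLt d.isLt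
    (fun hh => hab (Fin.ext hh)) (fun hh => hac (Fin.ext hh)) (fun hh => had (Fin.ext hh))
    (fun hh => hbc (Fin.ext hh)) (fun hh => hbd (Fin.ext hh)) (fun hh => hcd (Fin.ext hh))
  exact fun hcr => h (hiff.mp hcr)

lemma univ_lemma (n : ℕ) : UniversalFor (starGraph n) (Ofam 2 n) := by
  intro H hH
  obtain ⟨g, D, hcard, hgood, hpair, hAdj⟩ := hH
  obtain ⟨p, q, hpq, hDpq⟩ := Finset.card_eq_two.mp hcard
  have hpD : p ∈ D := by rw [hDpq]; simp
  have hqD : q ∈ D := by rw [hDpq]; simp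
  obtain ⟨h11, h12, h21, h22, hnc⟩ := hpair p hpD q hqD hpq
  have hp12 : p.1 ≠ p.2 := (hgood p hpD).1
  have hq12 : q.1 ≠ q.2 := (hgood q hqD).1
  have hmemD : ∀ r ∈ D, r = p ∨ r = q := by intro r hr; rw [hDpq] at hr; simpa using hr
  obtain ⟨e₁, e₂, d, hd1, hd2, hde, hcases⟩ :=
    exists_base n (p.1 : ℕ) (q.1 : ℕ) p.1.isLt q.1.isLt (fun hh => h11 (Fin.ext hh))
  obtain ⟨a, haS, hbS, hblt⟩ := diff_lemma n d hd1 hd2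
  have he1lt : e₁ < n := by
    rcases hcases with ⟨h1, _⟩ | ⟨h1, _⟩ <;> rw [h1] <;> exact Fin.isLt _
  obtain ⟨t, ht⟩ : ∃ t, t = (n + a - e₁) % n := ⟨_, rfl⟩
  have halt : a < n := by omega
  have hshift1 : (e₁ + t) % n = a := by
    rw [ht, Nat.add_mod_mod, show e₁ + (n + a - e₁) = n + a by omega, Nat.add_mod_left,
      Nat.mod_eq_of_lt halt]
  have hshift2 : (e₂ + t) % n = a + d := by
    rw [← hde, Nat.mod_add_mod, show e₁ + d + t = e₁ + t + d by ring, ← Nat.mod_add_mod,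
      hshift1, Nat.mod_eq_of_lt hblt]
  have hp1S : ((p.1 : ℕ) + t) % n ∈ sqrtSet n := by
    rcases hcases with ⟨h1, h2⟩ | ⟨h1, h2⟩
    · rw [← h1, hshift1]; exact haS
    · rw [← h2, hshift2]; exact hbS
  have hq1S : ((q.1 : ℕ) + t) % n ∈ sqrtSet n := by
    rcases hcases with ⟨h1, h2⟩ | ⟨h1, h2⟩
    · rw [← h2, hshift2]; exact hbS
    · rw [← h1, hshift1]; exact haS
  have hShiftS : ∀ z : Fin n, (z = p.1 ∨ z = q.1) → ((shiftF t z : Fin n) : ℕ) ∈ sqrtSet n := by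
    intro z hz
    rcases hz with hz | hz <;> rw [hz] <;> [exact hp1S; exact hq1S]
  refine ⟨fun v => shiftF t (g v), shiftF_inj.comp g.injective, ?_, ?_⟩
  · -- adjacency preserved
    intro u v huv
    rw [starGraph, SimpleGraph.fromRel_adj]
    refine ⟨fun hh => huv.ne (g.injective (shiftF_inj hh)), ?_⟩
    rcases (hAdj u v).mp huv with hc | hc | hc
    · exact Or.inl (Or.inl (cycAdj_shiftF hc))
    · refine Or.inl (Or.inr (Or.inl (hShiftS (g u) ?_)))
      rcases hmemD _ hc with he | he
      · exact Or.inl (congrArg Prod.fst he)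
      · exact Or.inr (congrArg Prod.fst he)
    · refine Or.inl (Or.inr (Or.inr (hShiftS (g v) ?_)))
      rcases hmemD _ hc with he | he
      · exact Or.inl (congrArg Prod.fst he)
      · exact Or.inr (congrArg Prod.fst he)
  · -- no crossings
    intro u v x y huv hxy hux huy hvx hvy
    have chordP : ∀ w z : Fin n, (g w, g z) ∈ D ∨ (g z, g w) ∈ D →
        ((g w, g z) = p ∨ (g z, g w) = p) ∨ ((g w, g z) = q ∨ (g z, g w) = q) := by
      intro w z hwz
      rcases hwz with h | h
      · rcases hmemD _ h with h' | h'
        · exact Or.inl (Or.inl h')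
        · exact Or.inr (Or.inl h')
      · rcases hmemD _ h with h' | h'
        · exact Or.inl (Or.inr h')
        · exact Or.inr (Or.inr h')
    have chordchord : ∀ u' v' x' y' : Fin n,
        ((g u', g v') = p ∨ (g v', g u') = p) → ((g x', g y') = q ∨ (g y', g x') = q) →
        ¬ chordsCross (shiftF t (g u')) (shiftF t (g v')) (shiftF t (g x')) (shiftF t (g y')) := by
      intro u' v' x' y' h1 h2
      have hncA : ¬ chordsCross p.1 p.2 q.1 q.2 := hnc
      have hncB : ¬ chordsCross p.2 p.1 q.1 q.2 := fun h => hncA ((chordsCross_swap₁ _ _ _ _).mpr h)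
      have hncAB : ¬ chordsCross p.1 p.2 q.2 q.1 := fun h => hncA ((chordsCross_swap₂ _ _ _ _).mp h)
      have hncBB : ¬ chordsCross p.2 p.1 q.2 q.1 := fun h => hncB ((chordsCross_swap₂ _ _ _ _).mp h)
      rcases h1 with h1 | h1 <;> rcases h2 with h2 | h2
      · have e1 : g u' = p.1 := congrArg Prod.fst h1
        have e2 : g v' = p.2 := congrArg Prod.snd h1
        have e3 : g x' = q.1 := congrArg Prod.fst h2
        have e4 : g y' = q.2 := congrArg Prod.snd h2
        rw [e1, e2, e3, e4]
        exact cross_shiftF hp12 h11 h12 h21 h22 hq12 hncA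
      · have e1 : g u' = p.1 := congrArg Prod.fst h1
        have e2 : g v' = p.2 := congrArg Prod.snd h1
        have e3 : g y' = q.1 := congrArg Prod.fst h2
        have e4 : g x' = q.2 := congrArg Prod.snd h2
        rw [e1, e2, e3, e4]
        exact cross_shiftF hp12 h12 h11 h22 h21 (Ne.symm hq12) hncAB
      · have e1 : g v' = p.1 := congrArg Prod.fst h1
        have e2 : g u' = p.2 := congrArg Prod.snd h1
        have e3 : g x' = q.1 := congrArg Prod.fst h2
        have e4 : g y' = q.2 := congrArg Prod.snd h2
        rw [e1, e2, e3, e4]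
        exact cross_shiftF (Ne.symm hp12) h21 h22 h11 h12 hq12 hncB
      · have e1 : g v' = p.1 := congrArg Prod.fst h1
        have e2 : g u' = p.2 := congrArg Prod.snd h1
        have e3 : g y' = q.1 := congrArg Prod.fst h2
        have e4 : g x' = q.2 := congrArg Prod.snd h2
        rw [e1, e2, e3, e4]
        exact cross_shiftF (Ne.symm hp12) h22 h21 h12 h11 (Ne.symm hq12) hncBB
    rcases (hAdj u v).mp huv with hc | hc | hc
    case _ => exact not_cross_of_cycAdj_left _ _ (cycAdj_shiftF hc)
    all_goals {
      rcases (hAdj x y).mp hxy with hc' | hc' | hc'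
      case _ => exact not_cross_of_cycAdj_right _ _ (cycAdj_shiftF hc')
      all_goals {
        have h1 := chordP u v (by tauto)
        have h2 := chordP x y (by tauto)
        rcases h1 with h1 | h1 <;> rcases h2 with h2 | h2
        · -- both chord p : contradiction
          exfalso
          rcases h1 with h1 | h1 <;> rcases h2 with h2 | h2 <;> rw [Prod.ext_iff] at h1 h2
          · exact hux (g.injective (h1.1.trans h2.1.symm))
          · exact huy (g.injective (h1.1.trans h2.1.symm))
          · exact hvx (g.injective (h1.1.trans h2.1.symm))
          · exact hvy (g.injective (h1.1.trans h2.1.symm))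
        · exact chordchord u v x y h1 h2
        · intro hcr
          exact chordchord x y u v h2 h1 ((chordsCross_comm' _ _ _ _).mp hcr)
        · exfalso
          rcases h1 with h1 | h1 <;> rcases h2 with h2 | h2 <;> rw [Prod.ext_iff] at h1 h2
          · exact hux (g.injective (h1.1.trans h2.1.symm))
          · exact huy (g.injective (h1.1.trans h2.1.symm))
          · exact hvx (g.injective (h1.1.trans h2.1.symm))
          · exact hvy (g.injective (h1.1.trans h2.1.symm))
      }
    }
lemma sqrtSet_card (n : ℕ) : (sqrtSet n).card ≤ 2 * Nat.sqrt n := by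
  unfold sqrtSet
  refine le_trans (Finset.card_union_le _ _) ?_
  have h1 : (Finset.range (Nat.sqrt n)).card = Nat.sqrt n := Finset.card_range _
  have h2 : ((Finset.Icc 1 (Nat.sqrt n)).image (fun i => i * Nat.sqrt n)).card ≤ Nat.sqrt n := by
    refine le_trans Finset.card_image_le ?_
    rw [Nat.card_Icc]; omega
  omega

lemma cycAdj_succ {n : ℕ} [NeZero n] {i j : Fin n} (h : cycAdj i j) : j = i + 1 ∨ i = j + 1 := by
  have hn2 : 2 ≤ n := by
    rcases Nat.lt_or_ge n 2 with h2 | h2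
    · exfalso; apply h.1
      have hi := i.isLt; have hj := j.isLt
      apply Fin.ext; omega
    · exact h2
  have hone : ((1 : Fin n) : ℕ) = 1 := by
    rw [Fin.val_one']; exact Nat.mod_eq_of_lt (by omega)
  have hval : ∀ x : Fin n, ((x + 1 : Fin n) : ℕ) = ((x : ℕ) + 1) % n := by
    intro x; rw [Fin.add_def, hone]
  rcases h.2 with h2 | h2
  · left; apply Fin.ext; rw [hval]; exact h2.symm
  · right; apply Fin.ext; rw [hval]; exact h2.symm

lemma cycAdj_symm {n : ℕ} {i j : Fin n} (h : cycAdj i j) : cycAdj j i :=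
  ⟨h.1.symm, h.2.symm⟩

noncomputable instance starGraphEdgeFintype (n : ℕ) : Fintype ((starGraph n).edgeSet) :=
  Fintype.ofFinite _

lemma edge_bound (n : ℕ) (hn : 0 < n) :
    (starGraph n).edgeFinset.card ≤ 2 * n + 4 * Nat.sqrt n * n := by
  classical
  haveI : NeZero n := ⟨hn.ne'⟩
  set S' : Finset (Fin n) := Finset.univ.filter (fun i => (i : ℕ) ∈ sqrtSet n) with hS'
  have hS'card : S'.card ≤ 2 * Nat.sqrt n := by
    have h1 : S'.card ≤ (sqrtSet n).card := by
      refine Finset.card_le_card_of_injOn (fun i => (i : ℕ)) ?_ ?_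
      · intro x hx
        simp only [Finset.mem_coe, hS', Finset.mem_filter] at hx
        exact hx.2
      · intro x _ y _ hxy; exact Fin.ext hxy
    exact le_trans h1 (sqrtSet_card n)
  set T : Finset (Fin n × Fin n) :=
    ((Finset.univ.image fun i : Fin n => (i, i + 1)) ∪
      (Finset.univ.image fun i : Fin n => (i + 1, i)))
      ∪ (S' ×ˢ Finset.univ ∪ Finset.univ ×ˢ S') with hT
  have hTcard : T.card ≤ 2 * n + 4 * Nat.sqrt n * n := by
    have c1 : ((Finset.univ : Finset (Fin n)).image fun i : Fin n => (i, i + 1)).card ≤ n := by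
      refine le_trans Finset.card_image_le ?_
      simp
    have c2 : ((Finset.univ : Finset (Fin n)).image fun i : Fin n => (i + 1, i)).card ≤ n := by
      refine le_trans Finset.card_image_le ?_
      simp
    have c3 : (S' ×ˢ (Finset.univ : Finset (Fin n))).card ≤ 2 * Nat.sqrt n * n := by
      rw [Finset.card_product, Finset.card_univ, Fintype.card_fin]
      exact Nat.mul_le_mul_right n hS'card
    have c4 : ((Finset.univ : Finset (Fin n)) ×ˢ S').card ≤ 2 * Nat.sqrt n * n := by
      rw [Finset.card_product, Finset.card_univ, Fintype.card_fin]
      calc n * S'.card ≤ n * (2 * Nat.sqrt n) := Nat.mul_le_mul_left n hS'card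
        _ = 2 * Nat.sqrt n * n := by ring
    rw [hT]
    refine le_trans (Finset.card_union_le _ _) ?_
    have := Finset.card_union_le ((Finset.univ : Finset (Fin n)).image fun i : Fin n => (i, i + 1))
      ((Finset.univ : Finset (Fin n)).image fun i : Fin n => (i + 1, i))
    have := Finset.card_union_le (S' ×ˢ (Finset.univ : Finset (Fin n)))
      ((Finset.univ : Finset (Fin n)) ×ˢ S')
    have hfk : 4 * Nat.sqrt n * n = 2 * Nat.sqrt n * n + 2 * Nat.sqrt n * n := by ring
    omega
  have hsurj : (starGraph n).edgeFinset.card ≤ T.card := by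
    apply Finset.card_le_card_of_surjOn (fun p : Fin n × Fin n => s(p.1, p.2))
    intro e he
    simp only [Finset.coe_sort_coe, Finset.mem_coe, SimpleGraph.mem_edgeFinset] at he
    revert he
    refine Sym2.ind (fun i j he => ?_) e
    rw [SimpleGraph.mem_edgeSet, starGraph, SimpleGraph.fromRel_adj] at he
    obtain ⟨hne, hrel⟩ := he
    have hrel' : cycAdj i j ∨ (i : ℕ) ∈ sqrtSet n ∨ (j : ℕ) ∈ sqrtSet n := by
      rcases hrel with h | h
      · exact h
      · rcases h with h | h | h
        · exact Or.inl (cycAdj_symm h)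
        · exact Or.inr (Or.inr h)
        · exact Or.inr (Or.inl h)
    refine ⟨(i, j), ?_, rfl⟩
    simp only [hT, Finset.coe_union, Set.mem_union, Finset.coe_image, Finset.coe_univ,
      Set.image_univ, Set.mem_range, Finset.coe_product, Set.mem_prod, Finset.mem_coe,
      hS', Finset.mem_filter, Finset.mem_univ, true_and]
    rcases hrel' with h | h | h
    · rcases cycAdj_succ h with h1 | h1
      · exact Or.inl (Or.inl ⟨i, by rw [h1]⟩)
      · exact Or.inl (Or.inr ⟨j, by rw [h1]⟩)
    · exact Or.inr (Or.inl ⟨h, trivial⟩)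
    · exact Or.inr (Or.inr ⟨trivial, h⟩)
  omega

/-- There is a convex geometric graph with `n` vertices and `O(n^{3/2})` edges that is
universal for `O_2(n)`: the regular `n`-gon with stars centered at the vertices
indexed by `S`. -/
theorem stmt_5 :
    ∃ c : ℝ, 0 < c ∧ ∀ n : ℕ,
      UniversalFor (starGraph n) (Ofam 2 n) ∧
      ((starGraph n).edgeSet.ncard : ℝ) ≤ c * (n : ℝ) ^ ((3 : ℝ) / 2) := by
  refine ⟨6, by norm_num, fun n => ⟨univ_lemma n, ?_⟩⟩
  have hcard : (starGraph n).edgeSet.ncard = (starGraph n).edgeFinset.card := by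
    rw [Set.ncard_eq_toFinset_card']; exact congrArg Finset.card (Set.toFinset_congr rfl)
  rcases Nat.eq_zero_or_pos n with hn | hn
  · subst hn
    have h0 : (starGraph 0).edgeSet.ncard = 0 := by
      have hie : IsEmpty (Sym2 (Fin 0)) := by infer_instance
      have : (starGraph 0).edgeSet = ∅ := Set.eq_empty_of_isEmpty _
      rw [this, Set.ncard_empty]
    rw [h0]
    push_cast
    positivity
  · have hb := edge_bound n hn
    have h1 : ((starGraph n).edgeSet.ncard : ℝ) ≤ 2 * n + 4 * (Nat.sqrt n : ℝ) * n := by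
      rw [hcard]
      exact_mod_cast hb
    have hsq : (Nat.sqrt n : ℝ) ≤ Real.sqrt n := by
      rw [Real.le_sqrt (by positivity) (by positivity)]
      exact_mod_cast Nat.sqrt_le' n
    have h1n : (1 : ℝ) ≤ Real.sqrt n := by
      rw [show (1:ℝ) = Real.sqrt 1 by simp]
      exact Real.sqrt_le_sqrt (by exact_mod_cast hn)
    have h32 : (n : ℝ) ^ ((3:ℝ)/2) = n * Real.sqrt n := by
      rw [Real.sqrt_eq_rpow, show ((3:ℝ)/2) = 1 + 1/2 by norm_num,
        Real.rpow_add (by exact_mod_cast hn), Real.rpow_one]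
    rw [h32]
    have hn1 : (1:ℝ) ≤ n := by exact_mod_cast hn
    nlinarith [Real.sqrt_nonneg (n:ℝ), hsq, h1, hn1, h1n,
      mul_le_mul_of_nonneg_right hsq (by positivity : (0:ℝ) ≤ (n:ℝ))]
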